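/- Let S be an unambiguous E*-unitary inverse semigroup with zero. Then every finitely generated compatible order ideal of S is generated by a finite orthogonal set: for any finite compatible set {s₁,…,sₘ}, there is a finite pairwise-orthogonal set {t₁,…,tₙ} with the same generated order ideal. -/
import Mathlib


/-- An inverse semigroup with zero, equipped with its natural partial order:
`a ≤ b ↔ a = b * (a⁻¹ * a)`. -/
class InverseZeroSemigroup (S : Type*) extends Semigroup S, Zero S, Inv S, PartialOrder S where
  mul_inv_mul : ∀ a : S, a * a⁻¹ * a = a
  inv_mul_inv : ∀ a : S, a⁻¹ * a * a⁻¹ = a⁻¹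
  idem_comm : ∀ e f : S, e * e = e → f * f = f → e * f = f * e
  zero_mul : ∀ a : S, (0 : S) * a = 0
  mul_zero : ∀ a : S, a * (0 : S) = 0
  le_iff : ∀ a b : S, a ≤ b ↔ a = b * (a⁻¹ * a)

variable {S : Type*} [InverseZeroSemigroup S]

/-- `s` and `t` are compatible if `s⁻¹t` and `st⁻¹` are idempotents. -/
def Compatible (s t : S) : Prop :=
  (s⁻¹ * t) * (s⁻¹ * t) = s⁻¹ * t ∧ (s * t⁻¹) * (s * t⁻¹) = s * t⁻¹

/-- `s` and `t` are orthogonal if `s⁻¹t = 0 = st⁻¹`. -/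
def Orthogonal (s t : S) : Prop := s⁻¹ * t = 0 ∧ s * t⁻¹ = 0

namespace IZS

open InverseZeroSemigroup

local notation "mim" => InverseZeroSemigroup.mul_inv_mul
local notation "imi" => InverseZeroSemigroup.inv_mul_inv

lemma idem_mul {e f : S} (he : e * e = e) (hf : f * f = f) :
    (e * f) * (e * f) = e * f := by
  have h := idem_comm e f he hf
  calc (e * f) * (e * f) = e * (f * e) * f := by simp [mul_assoc]
    _ = e * (e * f) * f := by rw [h]
    _ = (e * e) * (f * f) := by simp [mul_assoc]
    _ = e * f := by rw [he, hf]

lemma idem_inv_mul (a : S) : (a⁻¹ * a) * (a⁻¹ * a) = a⁻¹ * a := by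
  calc (a⁻¹ * a) * (a⁻¹ * a) = (a⁻¹ * a * a⁻¹) * a := by simp [mul_assoc]
    _ = a⁻¹ * a := by rw [imi a]

lemma idem_mul_inv (a : S) : (a * a⁻¹) * (a * a⁻¹) = a * a⁻¹ := by
  calc (a * a⁻¹) * (a * a⁻¹) = (a * a⁻¹ * a) * a⁻¹ := by simp [mul_assoc]
    _ = a * a⁻¹ := by rw [mim a]

lemma inv_unique {a x : S} (h1 : a * x * a = a) (h2 : x * a * x = x) : x = a⁻¹ := by
  have hax : (a * x) * (a * x) = a * x := by
    calc (a * x) * (a * x) = (a * x * a) * x := by simp [mul_assoc]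
      _ = a * x := by rw [h1]
  have hxa : (x * a) * (x * a) = x * a := by
    calc (x * a) * (x * a) = (x * a * x) * a := by simp [mul_assoc]
      _ = x * a := by rw [h2]
  have h3 : x = x * (a * a⁻¹) := by
    have hc := idem_comm (a * a⁻¹) (a * x) (idem_mul_inv a) hax
    calc x = x * a * x := h2.symm
      _ = x * ((a * a⁻¹ * a) * x) := by rw [mim a, ← mul_assoc]
      _ = x * ((a * a⁻¹) * (a * x)) := by simp [mul_assoc]
      _ = x * ((a * x) * (a * a⁻¹)) := by rw [hc]
      _ = (x * a * x) * (a * a⁻¹) := by simp [mul_assoc]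
      _ = x * (a * a⁻¹) := by rw [h2]
  have h4 : (x * a) * (a⁻¹ * a) = (a⁻¹ * a) * (x * a) :=
    idem_comm _ _ hxa (idem_inv_mul a)
  calc x = x * (a * a⁻¹) := h3
    _ = x * ((a * a⁻¹ * a) * a⁻¹) := by rw [mim a, ← mul_assoc]
    _ = (x * a) * (a⁻¹ * a) * a⁻¹ := by simp [mul_assoc]
    _ = (a⁻¹ * a) * (x * a) * a⁻¹ := by rw [h4]
    _ = a⁻¹ * (a * x * a) * a⁻¹ := by simp [mul_assoc]
    _ = a⁻¹ * a * a⁻¹ := by rw [h1]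
    _ = a⁻¹ := imi a

lemma inv_inv' (a : S) : a⁻¹⁻¹ = a :=
  (inv_unique (imi a) (mim a)).symm

lemma idem_inv {e : S} (he : e * e = e) : e⁻¹ = e := by
  refine (inv_unique ?_ ?_).symm <;> rw [he, he]

lemma mul_inv_rev' (a b : S) : (a * b)⁻¹ = b⁻¹ * a⁻¹ := by
  refine (inv_unique ?_ ?_).symm
  · have h := idem_comm (b * b⁻¹) (a⁻¹ * a) (idem_mul_inv b) (idem_inv_mul a)
    calc a * b * (b⁻¹ * a⁻¹) * (a * b) = a * ((b * b⁻¹) * (a⁻¹ * a)) * b := by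
          simp [mul_assoc]
      _ = a * ((a⁻¹ * a) * (b * b⁻¹)) * b := by rw [h]
      _ = (a * a⁻¹ * a) * (b * b⁻¹ * b) := by simp [mul_assoc]
      _ = a * b := by rw [mim a, mim b]
  · have h := idem_comm (a⁻¹ * a) (b * b⁻¹) (idem_inv_mul a) (idem_mul_inv b)
    calc b⁻¹ * a⁻¹ * (a * b) * (b⁻¹ * a⁻¹) = b⁻¹ * ((a⁻¹ * a) * (b * b⁻¹)) * a⁻¹ := by
          simp [mul_assoc]
      _ = b⁻¹ * ((b * b⁻¹) * (a⁻¹ * a)) * a⁻¹ := by rw [h]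
      _ = (b⁻¹ * b * b⁻¹) * (a⁻¹ * a * a⁻¹) := by simp [mul_assoc]
      _ = b⁻¹ * a⁻¹ := by rw [imi a, imi b]

lemma zero_inv : (0 : S)⁻¹ = 0 := by
  have h := imi (0 : S)
  rw [InverseZeroSemigroup.mul_zero, InverseZeroSemigroup.zero_mul] at h
  exact h.symm

lemma zero_le' (a : S) : (0 : S) ≤ a := by
  rw [le_iff, zero_inv, InverseZeroSemigroup.zero_mul, InverseZeroSemigroup.mul_zero]

lemma le_zero' {a : S} (h : a ≤ 0) : a = 0 := by
  rw [le_iff] at h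
  rwa [InverseZeroSemigroup.zero_mul] at h

/-- `a ≤ b` iff `a = b * e` for some idempotent `e`. -/
lemma le_iff_right {a b : S} : a ≤ b ↔ ∃ e, e * e = e ∧ a = b * e := by
  constructor
  · intro h
    exact ⟨a⁻¹ * a, idem_inv_mul a, (le_iff a b).1 h⟩
  · rintro ⟨e, he, rfl⟩
    rw [le_iff]
    have hinv : (b * e)⁻¹ = e * b⁻¹ := by rw [mul_inv_rev', idem_inv he]
    rw [hinv]
    have h1 : e * (b⁻¹ * b) = (b⁻¹ * b) * e := idem_comm _ _ he (idem_inv_mul b)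
    calc b * e = (b * b⁻¹ * b) * (e * e) := by rw [mim b, he]
      _ = b * ((b⁻¹ * b) * e) * e := by simp [mul_assoc]
      _ = b * (e * (b⁻¹ * b)) * e := by rw [h1]
      _ = b * (e * b⁻¹ * (b * e)) := by simp [mul_assoc]

lemma le_iff_left {a b : S} : a ≤ b ↔ ∃ e, e * e = e ∧ a = e * b := by
  rw [le_iff_right]
  constructor
  · rintro ⟨e, he, rfl⟩
    refine ⟨b * e * b⁻¹, ?_, ?_⟩
    · have h1 : e * (b⁻¹ * b) = (b⁻¹ * b) * e := idem_comm _ _ he (idem_inv_mul b)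
      calc (b * e * b⁻¹) * (b * e * b⁻¹) = b * (e * (b⁻¹ * b)) * e * b⁻¹ := by
            simp [mul_assoc]
        _ = b * ((b⁻¹ * b) * e) * e * b⁻¹ := by rw [h1]
        _ = (b * b⁻¹ * b) * (e * e) * b⁻¹ := by simp [mul_assoc]
        _ = b * e * b⁻¹ := by rw [mim b, he]
    · have h1 : (b⁻¹ * b) * e = e * (b⁻¹ * b) := idem_comm _ _ (idem_inv_mul b) he
      calc b * e = (b * b⁻¹ * b) * e := by rw [mim b]
        _ = b * ((b⁻¹ * b) * e) := by simp [mul_assoc]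
        _ = b * (e * (b⁻¹ * b)) := by rw [h1]
        _ = (b * e * b⁻¹) * b := by simp [mul_assoc]
  · rintro ⟨e, he, rfl⟩
    refine ⟨b⁻¹ * e * b, ?_, ?_⟩
    · have h1 : e * (b * b⁻¹) = (b * b⁻¹) * e := idem_comm _ _ he (idem_mul_inv b)
      calc (b⁻¹ * e * b) * (b⁻¹ * e * b) = b⁻¹ * (e * (b * b⁻¹)) * e * b := by
            simp [mul_assoc]
        _ = b⁻¹ * ((b * b⁻¹) * e) * e * b := by rw [h1]
        _ = (b⁻¹ * b * b⁻¹) * (e * e) * b := by simp [mul_assoc]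
        _ = b⁻¹ * e * b := by rw [imi b, he]
    · have h1 : e * (b * b⁻¹) = (b * b⁻¹) * e := idem_comm _ _ he (idem_mul_inv b)
      calc e * b = e * (b * b⁻¹ * b) := by rw [mim b]
        _ = (e * (b * b⁻¹)) * b := by simp [mul_assoc]
        _ = ((b * b⁻¹) * e) * b := by rw [h1]
        _ = b * (b⁻¹ * e * b) := by simp [mul_assoc]

lemma mul_le_mul_left' {a b : S} (c : S) (h : a ≤ b) : c * a ≤ c * b := by
  rcases le_iff_right.1 h with ⟨e, he, rfl⟩
  exact le_iff_right.2 ⟨e, he, by simp [mul_assoc]⟩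

lemma mul_le_mul_right' {a b : S} (c : S) (h : a ≤ b) : a * c ≤ b * c := by
  rcases le_iff_left.1 h with ⟨e, he, rfl⟩
  exact le_iff_left.2 ⟨e, he, by simp [mul_assoc]⟩

lemma inv_le_inv' {a b : S} (h : a ≤ b) : a⁻¹ ≤ b⁻¹ := by
  rcases le_iff_right.1 h with ⟨e, he, rfl⟩
  rw [mul_inv_rev', idem_inv he]
  exact le_iff_left.2 ⟨e, he, rfl⟩

lemma idem_mul_le_left {e : S} (he : e * e = e) (s : S) : e * s ≤ s :=
  le_iff_left.2 ⟨e, he, rfl⟩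

lemma idem_mul_le_right {e : S} (he : e * e = e) (s : S) : s * e ≤ s :=
  le_iff_right.2 ⟨e, he, rfl⟩

lemma idem_le_iff {e f : S} (he : e * e = e) : e ≤ f ↔ e = f * e := by
  rw [le_iff, idem_inv he, he]

lemma ne_zero_inv {a : S} (ha : a ≠ 0) : a⁻¹ ≠ 0 := fun h => ha (by
  rw [← inv_inv' a, h, zero_inv])

/-- The key comparability fact: two elements with a common nonzero lower
bound are comparable. -/
lemma comparable_of_lower_bound
    (hE : ∀ e s : S, e ≠ 0 → e * e = e → e ≤ s → s * s = s)
    (hU : ∀ e f : S, e * e = e → f * f = f → e ≠ 0 → f ≠ 0 → e * f ≠ 0 →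
      e ≤ f ∨ f ≤ e)
    {a s t : S} (ha : a ≠ 0) (has : a ≤ s) (hat : a ≤ t) :
    s ≤ t ∨ t ≤ s := by
  have key : ∀ w u v : S, w ≠ 0 → w ≤ u → w ≤ v →
      (u⁻¹ * v) * (u⁻¹ * v) = u⁻¹ * v := by
    intro w u v hw hwu hwv
    have hua : w = u * (w⁻¹ * w) := (le_iff w u).1 hwu
    have h1 : u⁻¹ * w = (u⁻¹ * u) * (w⁻¹ * w) := by
      conv_lhs => rw [hua]
      simp [mul_assoc]
    have hidem : (u⁻¹ * w) * (u⁻¹ * w) = u⁻¹ * w := by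
      rw [h1]; exact idem_mul (idem_inv_mul u) (idem_inv_mul w)
    have hne : u⁻¹ * w ≠ 0 := by
      intro h0
      apply hw
      have huw : u * (u⁻¹ * w) = w := by
        conv_lhs => rw [hua]
        calc u * (u⁻¹ * (u * (w⁻¹ * w))) = (u * u⁻¹ * u) * (w⁻¹ * w) := by
              simp [mul_assoc]
          _ = u * (w⁻¹ * w) := by rw [mim u]
          _ = w := hua.symm
      rw [← huw, h0, InverseZeroSemigroup.mul_zero]
    have hle : u⁻¹ * w ≤ u⁻¹ * v := mul_le_mul_left' u⁻¹ hwv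
    exact hE _ _ hne hidem hle
  have hsne : s ≠ 0 := fun h => ha (le_zero' (h ▸ has))
  have htne : t ≠ 0 := fun h => ha (le_zero' (h ▸ hat))
  have hsine : s⁻¹ * s ≠ 0 := by
    intro h
    apply hsne
    calc s = s * s⁻¹ * s := (mim s).symm
      _ = s * (s⁻¹ * s) := by rw [mul_assoc]
      _ = 0 := by rw [h, InverseZeroSemigroup.mul_zero]
  have htine : t⁻¹ * t ≠ 0 := by
    intro h
    apply htne
    calc t = t * t⁻¹ * t := (mim t).symm
      _ = t * (t⁻¹ * t) := by rw [mul_assoc]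
      _ = 0 := by rw [h, InverseZeroSemigroup.mul_zero]
  have haine : a⁻¹ * a ≠ 0 := by
    intro h
    apply ha
    calc a = a * a⁻¹ * a := (mim a).symm
      _ = a * (a⁻¹ * a) := by rw [mul_assoc]
      _ = 0 := by rw [h, InverseZeroSemigroup.mul_zero]
  have hais : a⁻¹ * a ≤ s⁻¹ * s :=
    le_trans (mul_le_mul_right' a (inv_le_inv' has)) (mul_le_mul_left' s⁻¹ has)
  have hait : a⁻¹ * a ≤ t⁻¹ * t :=
    le_trans (mul_le_mul_right' a (inv_le_inv' hat)) (mul_le_mul_left' t⁻¹ hat)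
  have hprod : (s⁻¹ * s) * (t⁻¹ * t) ≠ 0 := by
    intro h0
    apply haine
    have h1 : a⁻¹ * a = (s⁻¹ * s) * (a⁻¹ * a) := (idem_le_iff (idem_inv_mul a)).1 hais
    have h2 : a⁻¹ * a = (t⁻¹ * t) * (a⁻¹ * a) := (idem_le_iff (idem_inv_mul a)).1 hait
    calc a⁻¹ * a = (s⁻¹ * s) * ((t⁻¹ * t) * (a⁻¹ * a)) := by rw [← h2, ← h1]
      _ = ((s⁻¹ * s) * (t⁻¹ * t)) * (a⁻¹ * a) := by rw [← mul_assoc]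
      _ = 0 := by rw [h0, InverseZeroSemigroup.zero_mul]
  rcases hU _ _ (idem_inv_mul s) (idem_inv_mul t) hsine htine hprod with h | h
  · left
    have htsidem : (t * s⁻¹) * (t * s⁻¹) = t * s⁻¹ := by
      have hk := key a⁻¹ t⁻¹ s⁻¹ (ne_zero_inv ha) (inv_le_inv' hat) (inv_le_inv' has)
      rwa [inv_inv'] at hk
    set x := t * (s⁻¹ * s) with hx
    have hxs : x ≤ s := by
      have hx2 : x = (t * s⁻¹) * s := by rw [hx, mul_assoc]
      rw [hx2]
      exact idem_mul_le_left htsidem s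
    have hxinvx : x⁻¹ * x = s⁻¹ * s := by
      have hxi : x⁻¹ = (s⁻¹ * s) * t⁻¹ := by
        rw [hx, mul_inv_rev', idem_inv (idem_inv_mul s)]
      have hcomm : (s⁻¹ * s) * (t⁻¹ * t) = s⁻¹ * s := by
        rw [idem_comm _ _ (idem_inv_mul s) (idem_inv_mul t)]
        exact ((idem_le_iff (idem_inv_mul s)).1 h).symm
      calc x⁻¹ * x = ((s⁻¹ * s) * t⁻¹) * (t * (s⁻¹ * s)) := by rw [hxi, hx]
        _ = ((s⁻¹ * s) * (t⁻¹ * t)) * (s⁻¹ * s) := by simp [mul_assoc]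
        _ = (s⁻¹ * s) * (s⁻¹ * s) := by rw [hcomm]
        _ = s⁻¹ * s := idem_inv_mul s
    have hxeq : x = s := by
      have h5 := (le_iff x s).1 hxs
      rw [hxinvx] at h5
      rw [h5, ← mul_assoc, mim s]
    rw [← hxeq, hx]
    exact idem_mul_le_right (idem_inv_mul s) t
  · right
    have hstidem : (s * t⁻¹) * (s * t⁻¹) = s * t⁻¹ := by
      have hk := key a⁻¹ s⁻¹ t⁻¹ (ne_zero_inv ha) (inv_le_inv' has) (inv_le_inv' hat)
      rwa [inv_inv'] at hk
    set x := s * (t⁻¹ * t) with hx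
    have hxt : x ≤ t := by
      have hx2 : x = (s * t⁻¹) * t := by rw [hx, mul_assoc]
      rw [hx2]
      exact idem_mul_le_left hstidem t
    have hxinvx : x⁻¹ * x = t⁻¹ * t := by
      have hxi : x⁻¹ = (t⁻¹ * t) * s⁻¹ := by
        rw [hx, mul_inv_rev', idem_inv (idem_inv_mul t)]
      have hcomm : (t⁻¹ * t) * (s⁻¹ * s) = t⁻¹ * t := by
        rw [idem_comm _ _ (idem_inv_mul t) (idem_inv_mul s)]
        exact ((idem_le_iff (idem_inv_mul t)).1 h).symm
      calc x⁻¹ * x = ((t⁻¹ * t) * s⁻¹) * (s * (t⁻¹ * t)) := by rw [hxi, hx]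
        _ = ((t⁻¹ * t) * (s⁻¹ * s)) * (t⁻¹ * t) := by simp [mul_assoc]
        _ = (t⁻¹ * t) * (t⁻¹ * t) := by rw [hcomm]
        _ = t⁻¹ * t := idem_inv_mul t
    have hxeq : x = t := by
      have h5 := (le_iff x t).1 hxt
      rw [hxinvx] at h5
      rw [h5, ← mul_assoc, mim t]
    rw [← hxeq, hx]
    exact idem_mul_le_right (idem_inv_mul t) s

/-- Compatible, non-orthogonal, nonzero elements are comparable. -/
lemma comparable_of_not_orthogonal
    (hE : ∀ e s : S, e ≠ 0 → e * e = e → e ≤ s → s * s = s)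
    (hU : ∀ e f : S, e * e = e → f * f = f → e ≠ 0 → f ≠ 0 → e * f ≠ 0 →
      e ≤ f ∨ f ≤ e)
    {s t : S} (hc : Compatible s t) (hno : ¬ Orthogonal s t) :
    s ≤ t ∨ t ≤ s := by
  obtain ⟨h1, h2⟩ := hc
  rw [Orthogonal, not_and_or] at hno
  rcases hno with h | h
  · refine comparable_of_lower_bound hE hU (a := s * (s⁻¹ * t)) ?_ ?_ ?_
    · intro h0
      apply h
      calc s⁻¹ * t = (s⁻¹ * s * s⁻¹) * t := by rw [imi s]
        _ = s⁻¹ * (s * (s⁻¹ * t)) := by simp [mul_assoc]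
        _ = 0 := by rw [h0, InverseZeroSemigroup.mul_zero]
    · exact idem_mul_le_right h1 s
    · have hx : s * (s⁻¹ * t) = (s * s⁻¹) * t := by rw [mul_assoc]
      rw [hx]
      exact idem_mul_le_left (idem_mul_inv s) t
  · refine comparable_of_lower_bound hE hU (a := (s * t⁻¹) * t) ?_ ?_ ?_
    · intro h0
      apply h
      calc s * t⁻¹ = s * (t⁻¹ * t * t⁻¹) := by rw [imi t]
        _ = ((s * t⁻¹) * t) * t⁻¹ := by simp [mul_assoc]
        _ = 0 := by rw [h0, InverseZeroSemigroup.zero_mul]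
    · have hx : (s * t⁻¹) * t = s * (t⁻¹ * t) := by rw [mul_assoc]
      rw [hx]
      exact idem_mul_le_right (idem_inv_mul t) s
    · exact idem_mul_le_left h2 t

end IZS

/-- In an unambiguous `E*`-unitary inverse semigroup with zero, every
finitely generated compatible order ideal is generated by a finite orthogonal
set. -/
theorem compatible_ideal_orthogonal_generated
    (hE : ∀ e s : S, e ≠ 0 → e * e = e → e ≤ s → s * s = s)
    (hU : ∀ e f : S, e * e = e → f * f = f → e ≠ 0 → f ≠ 0 → e * f ≠ 0 →
      e ≤ f ∨ f ≤ e)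
    (A : Finset S) (hA : (↑A : Set S).Pairwise Compatible) :
    ∃ B : Finset S, (↑B : Set S).Pairwise Orthogonal ∧
      {y : S | ∃ x ∈ A, y ≤ x} = {y : S | ∃ x ∈ B, y ≤ x} := by
  classical
  refine ⟨A.filter (fun s => ∀ t ∈ A, ¬ s < t), ?_, ?_⟩
  · intro b hb c hc hbc
    simp only [Finset.coe_filter, Set.mem_setOf_eq] at hb hc
    obtain ⟨hbA, hbmax⟩ := hb
    obtain ⟨hcA, hcmax⟩ := hc
    by_contra hno
    rcases IZS.comparable_of_not_orthogonal hE hU (hA hbA hcA hbc) hno with h | h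
    · exact hbmax c hcA (lt_of_le_of_ne h hbc)
    · exact hcmax b hbA (lt_of_le_of_ne h (Ne.symm hbc))
  · ext y
    simp only [Set.mem_setOf_eq]
    constructor
    · rintro ⟨x, hxA, hyx⟩
      obtain ⟨b, hxb, hbmax⟩ := A.exists_le_maximal hxA
      refine ⟨b, ?_, le_trans hyx hxb⟩
      rw [Finset.mem_filter]
      exact ⟨hbmax.1, fun t ht hlt => hlt.ne (le_antisymm hlt.le (hbmax.2 ht hlt.le))⟩
    · rintro ⟨x, hxB, hyx⟩
      exact ⟨x, (Finset.mem_filter.1 hxB).1, hyx⟩
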